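/- Let λ > 2. Then 0 does not lie in the closure of 𝓔₁, and the Möbius transformation z ↦ (λz − 2)/(2z), i.e. the action of the matrix C⁻¹ = !![λ/2, -1; 1, 0] (the inverse of C = !![0, 1; -1, λ/2]), maps 𝓔₁ bijectively onto the open unit disc {w ∈ ℂ : |w| < 1}. -/

import Mathlib

/-- For `λ > 2`, `0` is not in the closure of `𝓔₁`, and the Möbius
transformation `z ↦ (λz − 2)/(2z)` of the matrix `C⁻¹ = !![λ/2, -1; 1, 0]` maps `𝓔₁`
bijectively onto the open unit disc. -/
theorem Cinv_maps_E1_onto_unit_disc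
    (lam : ℝ) (hlam : 2 < lam)
    (E1 : Set ℂ)
    (hE1 : E1 = Metric.ball ((((2 * lam) / ((lam + 2) * (lam - 2)) : ℝ)) : ℂ)
      (4 / ((lam + 2) * (lam - 2)))) :
    (0 : ℂ) ∉ closure E1 ∧
    Set.BijOn (fun z : ℂ => ((lam : ℂ) * z - 2) / (2 * z)) E1 (Metric.ball (0 : ℂ) 1) := by
  have hD : (0:ℝ) < (lam + 2) * (lam - 2) := by nlinarith
  set D : ℝ := (lam + 2) * (lam - 2) with hDdef
  have hDne : D ≠ 0 := ne_of_gt hD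
  set c : ℝ := 2 * lam / D with hc
  set r : ℝ := 4 / D with hr
  have hr0 : 0 < r := by positivity
  have hcr : r < c := by
    rw [hc, hr, div_lt_div_iff₀ hD hD]; nlinarith
  have hball : ∀ z : ℂ, z ∈ E1 ↔ ‖z - (c:ℂ)‖ < r := by
    intro z
    rw [hE1, Metric.mem_ball, Complex.dist_eq]
  have hne0 : ∀ z : ℂ, z ∈ E1 → z ≠ 0 := by
    intro z hz
    rintro rfl
    rw [hball] at hz
    simp only [zero_sub, norm_neg, Complex.norm_real, Real.norm_eq_abs] at hz
    rw [abs_of_pos (lt_trans hr0 hcr)] at hz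
    linarith
  -- key identity
  have hid : ∀ z : ℂ, Complex.normSq ((lam:ℂ) * z - 2) - Complex.normSq (2 * z)
      = D * (Complex.normSq (z - (c:ℝ)) - r ^ 2) := by
    intro z
    simp only [Complex.normSq_apply, Complex.sub_re, Complex.sub_im, Complex.mul_re,
      Complex.mul_im, Complex.ofReal_re, Complex.ofReal_im, Complex.re_ofNat,
      Complex.im_ofNat, hc, hr, hDdef]
    have hl1 : lam - 2 ≠ 0 := (by linarith : (0:ℝ) < lam - 2).ne'
    have hl2 : lam + 2 ≠ 0 := (by linarith : (0:ℝ) < lam + 2).ne'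
    field_simp
    ring
  have key : ∀ z : ℂ, z ≠ 0 →
      (‖((lam:ℂ) * z - 2) / (2 * z)‖ < 1 ↔ z ∈ E1) := by
    intro z hz
    have h2z : 0 < ‖2 * z‖ := by
      simpa using (norm_pos_iff.mpr (by simpa using hz : (2:ℂ) * z ≠ 0))
    rw [norm_div, div_lt_one h2z, hball z]
    have h1 : ‖(lam:ℂ) * z - 2‖ < ‖2 * z‖ ↔
        Complex.normSq ((lam:ℂ) * z - 2) < Complex.normSq (2 * z) := by
      rw [← Complex.sq_norm, ← Complex.sq_norm]
      constructor
      · intro h; exact pow_lt_pow_left₀ h (norm_nonneg _) two_ne_zero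
      · intro h; exact lt_of_pow_lt_pow_left₀ 2 (norm_nonneg _) h
    have h2 : ‖z - (c:ℂ)‖ < r ↔
        Complex.normSq (z - (c:ℂ)) < r ^ 2 := by
      rw [← Complex.sq_norm]
      constructor
      · intro h; exact pow_lt_pow_left₀ h (norm_nonneg _) two_ne_zero
      · intro h; exact lt_of_pow_lt_pow_left₀ 2 (le_of_lt hr0) h
    rw [h1, h2]
    have := hid z
    constructor <;> intro h <;> nlinarith [this, hD]
  constructor
  · rw [hE1, closure_ball _ (ne_of_gt hr0)]
    rw [Metric.mem_closedBall, Complex.dist_eq]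
    simp only [zero_sub, norm_neg, Complex.norm_real, Real.norm_eq_abs]
    rw [abs_of_pos (lt_trans hr0 hcr)]
    push_neg
    exact hcr
  · refine ⟨?_, ?_, ?_⟩
    · intro z hz
      rw [Metric.mem_ball, Complex.dist_eq, sub_zero]
      exact (key z (hne0 z hz)).2 hz
    · intro z₁ h₁ z₂ h₂ h
      have hz₁ := hne0 z₁ h₁
      have hz₂ := hne0 z₂ h₂
      simp only at h
      rw [div_eq_div_iff (by simpa using hz₁) (by simpa using hz₂)] at h
      have h4 : (4:ℂ) * z₂ = 4 * z₁ := by linear_combination -h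
      linear_combination -h4 / 4
    · intro w hw
      rw [Metric.mem_ball, Complex.dist_eq, sub_zero] at hw
      have hden : (lam:ℂ) - 2 * w ≠ 0 := by
        intro h
        have : (lam:ℂ) = 2 * w := by linear_combination h
        have habs : ‖((lam:ℂ))‖ = ‖2 * w‖ := by rw [this]
        rw [Complex.norm_real, Real.norm_eq_abs, abs_of_pos (by linarith), norm_mul] at habs
        simp at habs
        nlinarith [habs, hw]
      refine ⟨2 / ((lam:ℂ) - 2 * w), ?_, ?_⟩
      · have hzne : (2:ℂ) / ((lam:ℂ) - 2 * w) ≠ 0 := by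
          apply div_ne_zero (by norm_num) hden
        apply (key _ hzne).1
        have : ((lam:ℂ) * (2 / ((lam:ℂ) - 2 * w)) - 2) / (2 * (2 / ((lam:ℂ) - 2 * w))) = w := by
          field_simp
          ring
        rw [this]
        exact hw
      · simp only
        field_simp
        ring
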